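/- arXiv:2603.12518 — 2 statements merged into one kernel-verified Lean document; each statement's English description precedes it below -/
import Mathlib

section
/- Let ε₁,…,ε_n be i.i.d. real random variables independent of the fixed Hilbert-space elements X₁,…,X_n, with E[εᵢ] = 0 and variance σ² < ∞. Let U_n = n^{-1} Σᵢ (Xᵢ − X̄)(εᵢ − ε̄) and let γ̂_J^{-1/2} = Σ_{j=1}^J γ̂_j^{-1/2} φ̂_j ⊗ φ̂_j with (γ̂_j, φ̂_j) eigenpairs of the sample covariance operator γ̂ (assuming γ̂_j > 0 for j ≤ J). Then E[‖γ̂_J^{-1/2} U_n‖²] = σ² J / n. -/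
open MeasureTheory ProbabilityTheory
open scoped RealInnerProductSpace

/-- The rank-one operator `x ⊗ y : z ↦ ⟨z, x⟩ y` on a real inner product space. -/
noncomputable def rankOne {H : Type*} [NormedAddCommGroup H] [InnerProductSpace ℝ H]
    (x y : H) : H →L[ℝ] H := (innerSL ℝ x).smulRight y

/-- With i.i.d. centered errors of variance `σ²`, fixed regressors `X₁,…,X_n`, and
`γ̂_J^{-1/2} = Σ_{j≤J} γ̂_j^{-1/2} φ̂_j ⊗ φ̂_j`, one has
`E[‖γ̂_J^{-1/2} U_n‖²] = σ² J / n`, where `U_n = n⁻¹ Σᵢ (Xᵢ − X̄)(εᵢ − ε̄)`. -/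
theorem stmt_12 {H : Type*} [NormedAddCommGroup H] [InnerProductSpace ℝ H]
    {Ω : Type*} [MeasurableSpace Ω] (P : Measure Ω) [IsProbabilityMeasure P]
    (n J : ℕ) (hn : 0 < n) (X : Fin n → H)
    (Xbar : H) (hXbar : Xbar = (n : ℝ)⁻¹ • ∑ i, X i)
    (γhat : H →L[ℝ] H)
    (hγhat : γhat = (n : ℝ)⁻¹ • ∑ i, rankOne (X i - Xbar) (X i - Xbar))
    (φ : Fin J → H) (hortho : Orthonormal ℝ φ)
    (γv : Fin J → ℝ) (hpos : ∀ j, 0 < γv j) (heig : ∀ j, γhat (φ j) = γv j • φ j)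
    (ε : Fin n → Ω → ℝ) (hmeas : ∀ i, Measurable (ε i))
    (hindep : iIndepFun ε P)
    (hident : ∀ i i' : Fin n, P.map (ε i) = P.map (ε i'))
    (hL2 : ∀ i, MemLp (ε i) 2 P)
    (σ : ℝ) (hmean : ∀ i, ∫ ω, ε i ω ∂P = 0) (hvar : ∀ i, ∫ ω, (ε i ω) ^ 2 ∂P = σ ^ 2)
    (Shalf : H →L[ℝ] H)
    (hShalf : Shalf = ∑ j, (Real.sqrt (γv j))⁻¹ • rankOne (φ j) (φ j))
    (U : Ω → H)
    (hU : ∀ ω, U ω =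
      (n : ℝ)⁻¹ • ∑ i, (ε i ω - (n : ℝ)⁻¹ * ∑ k, ε k ω) • (X i - Xbar)) :
    ∫ ω, ‖Shalf (U ω)‖ ^ 2 ∂P = σ ^ 2 * J / n := by
  have hn' : (n : ℝ) ≠ 0 := Nat.cast_ne_zero.2 hn.ne'
  -- abbreviation for the centered regressors' coordinates
  set a : Fin n → Fin J → ℝ := fun i j => ⟪X i - Xbar, φ j⟫ with ha
  -- sum of centered regressors vanishes
  have hsumY : ∑ i, (X i - Xbar) = 0 := by
    have h1 : (n : ℝ) • Xbar = ∑ i, X i := by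
      rw [hXbar, smul_smul, mul_inv_cancel₀ hn', one_smul]
    rw [Finset.sum_sub_distrib, Finset.sum_const, Finset.card_univ, Fintype.card_fin,
      ← Nat.cast_smul_eq_nsmul ℝ, h1, sub_self]
  have hsa : ∀ j, ∑ i, a i j = 0 := by
    intro j
    rw [ha]
    rw [← sum_inner, hsumY, inner_zero_left]
  -- eigen-equation gives Σ_i a_ij^2 = n γv j
  have hA : ∀ j, ∑ i, (a i j) ^ 2 = n * γv j := by
    intro j
    have h1 : ⟪γhat (φ j), φ j⟫ = γv j := by
      rw [heig, real_inner_smul_left, real_inner_self_eq_norm_sq, hortho.1 j]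
      ring
    have h2 : ⟪γhat (φ j), φ j⟫ = (n : ℝ)⁻¹ * ∑ i, (a i j) ^ 2 := by
      rw [hγhat]
      simp only [ContinuousLinearMap.smul_apply, ContinuousLinearMap.sum_apply, rankOne,
        ContinuousLinearMap.smulRight_apply, innerSL_apply_apply, real_inner_smul_left, sum_inner]
      congr 1
      refine Finset.sum_congr rfl fun i _ => ?_
      simp only [ha]
      ring
    rw [h2] at h1
    field_simp at h1 ⊢
    linarith [h1]
  -- inner products of U with eigenvectors
  have hb : ∀ j ω, ⟪U ω, φ j⟫ = ∑ i, ((n : ℝ)⁻¹ * a i j) * ε i ω := by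
    intro j ω
    have e1 : ⟪U ω, φ j⟫ = (n : ℝ)⁻¹ * ∑ i, (ε i ω - (n : ℝ)⁻¹ * ∑ k, ε k ω) * a i j := by
      rw [hU, real_inner_smul_left, sum_inner]
      congr 1
      exact Finset.sum_congr rfl fun i _ => by rw [real_inner_smul_left, ha]
    rw [e1]
    obtain ⟨m, hm⟩ : ∃ m, (n : ℝ)⁻¹ * ∑ k, ε k ω = m := ⟨_, rfl⟩
    rw [hm]
    have e2 : ∑ i, (ε i ω - m) * a i j
        = ∑ i, ε i ω * a i j - m * ∑ i, a i j := by
      rw [Finset.mul_sum, ← Finset.sum_sub_distrib]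
      exact Finset.sum_congr rfl fun i _ => by ring
    rw [e2, hsa, mul_zero, sub_zero, Finset.mul_sum]
    exact Finset.sum_congr rfl fun i _ => by ring
  -- products of errors are integrable
  have hprod : ∀ i k : Fin n, Integrable (fun ω => ε i ω * ε k ω) P := by
    intro i k
    rcases eq_or_ne i k with rfl | hik
    · simpa [sq] using (hL2 i).integrable_sq
    · exact (hindep.indepFun hik).integrable_mul ((hL2 i).integrable one_le_two)
        ((hL2 k).integrable one_le_two)
  -- key variance computation
  have key : ∀ c : Fin n → ℝ, ∫ ω, (∑ i, c i * ε i ω) ^ 2 ∂P = σ ^ 2 * ∑ i, (c i) ^ 2 := by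
    intro c
    have h1 : ∀ ω, (∑ i, c i * ε i ω) ^ 2
        = ∑ i, ∑ k, (c i * c k) * (ε i ω * ε k ω) := by
      intro ω
      rw [sq, Finset.sum_mul_sum]
      exact Finset.sum_congr rfl fun i _ => Finset.sum_congr rfl fun k _ => by ring
    simp_rw [h1]
    rw [integral_finset_sum _ fun i _ =>
      (integrable_finset_sum _ fun k _ => (hprod i k).const_mul _)]
    have h2 : ∀ i : Fin n, ∫ ω, ∑ k, (c i * c k) * (ε i ω * ε k ω) ∂P
        = (c i) ^ 2 * σ ^ 2 := by
      intro i
      rw [integral_finset_sum _ fun k _ => (hprod i k).const_mul _]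
      have hterm : ∀ k : Fin n, ∫ ω, (c i * c k) * (ε i ω * ε k ω) ∂P
          = if k = i then (c i) ^ 2 * σ ^ 2 else 0 := by
        intro k
        rw [integral_const_mul]
        rcases eq_or_ne k i with rfl | hk
        · have h5 : ∫ ω, ε k ω * ε k ω ∂P = σ ^ 2 := by
            simpa [sq] using hvar k
          rw [h5, if_pos rfl]; ring
        · have hind : IndepFun (ε i) (ε k) P := hindep.indepFun (Ne.symm hk)
          have : ∫ ω, ε i ω * ε k ω ∂P = (∫ ω, ε i ω ∂P) * ∫ ω, ε k ω ∂P :=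
            hind.integral_mul_eq_mul_integral (hmeas i).aestronglyMeasurable (hmeas k).aestronglyMeasurable
          rw [this, hmean i, hmean k, if_neg hk]
          ring
      rw [Finset.sum_congr rfl fun k _ => hterm k, Finset.sum_ite_eq' Finset.univ i
        (fun _ => (c i) ^ 2 * σ ^ 2)]
      simp
    rw [Finset.sum_congr rfl fun i _ => h2 i, ← Finset.sum_mul]
    ring
  -- pointwise norm identity
  have hnorm : ∀ ω, ‖Shalf (U ω)‖ ^ 2 = ∑ j, (γv j)⁻¹ * (⟪U ω, φ j⟫) ^ 2 := by
    intro ω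
    have hS : Shalf (U ω) = ∑ j, ((Real.sqrt (γv j))⁻¹ * ⟪U ω, φ j⟫) • φ j := by
      rw [hShalf]
      simp only [ContinuousLinearMap.sum_apply, ContinuousLinearMap.smul_apply, rankOne,
        ContinuousLinearMap.smulRight_apply, innerSL_apply_apply, smul_smul]
      exact Finset.sum_congr rfl fun j _ => by rw [real_inner_comm]
    rw [hS, ← real_inner_self_eq_norm_sq, hortho.inner_sum]
    refine Finset.sum_congr rfl fun j _ => ?_
    simp only [conj_trivial]
    have h1 : ((Real.sqrt (γv j))⁻¹) ^ 2 = (γv j)⁻¹ := by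
      rw [inv_pow, Real.sq_sqrt (hpos j).le]
    nlinarith [h1]
  -- put things together
  simp_rw [hnorm]
  have hint : ∀ (j : Fin J), Integrable (fun ω => (γv j)⁻¹ * (⟪U ω, φ j⟫) ^ 2) P := by
    intro j
    have hm : MemLp (fun ω => ∑ i, ((n : ℝ)⁻¹ * a i j) * ε i ω) 2 P :=
      memLp_finset_sum _ fun i _ => (hL2 i).const_mul _
    have := (hm.integrable_sq).const_mul ((γv j)⁻¹)
    refine this.congr (Filter.Eventually.of_forall fun ω => ?_)
    dsimp only
    rw [hb j ω]
  rw [integral_finset_sum _ fun j _ => hint j]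
  have hj : ∀ j : Fin J, ∫ ω, (γv j)⁻¹ * (⟪U ω, φ j⟫) ^ 2 ∂P = σ ^ 2 / n := by
    intro j
    simp_rw [hb]
    rw [integral_const_mul, key]
    have h3 : ∑ i, ((n : ℝ)⁻¹ * a i j) ^ 2 = (n : ℝ)⁻¹ * γv j := by
      have : ∑ i, ((n : ℝ)⁻¹ * a i j) ^ 2 = ((n : ℝ)⁻¹) ^ 2 * ∑ i, (a i j) ^ 2 := by
        rw [Finset.mul_sum]
        exact Finset.sum_congr rfl fun i _ => by ring
      rw [this, hA j]
      field_simp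
    rw [h3]
    field_simp [(hpos j).ne']
  rw [Finset.sum_congr rfl fun j _ => hj j, Finset.sum_const, Finset.card_univ,
    Fintype.card_fin, nsmul_eq_mul]
  ring
end

section
/- Let F be the distribution function of a real random variable with finite second moment and G a differentiable distribution function with bounded derivative. If a sequence of distributions P_n converges to Q in second-order Wasserstein distance, then F_n converges to G uniformly on ℝ, where F_n and G are the CDFs of P_n and Q. -/
open MeasureTheory

theorem w2_aux_integrable (P Q : Measure ℝ) [IsProbabilityMeasure P] [IsProbabilityMeasure Q]
    (h2 : Integrable (fun x => x ^ 2) P) (hQ2 : Integrable (fun x => x ^ 2) Q)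
    (μ : Measure (ℝ × ℝ)) [IsProbabilityMeasure μ]
    (hfst : μ.map Prod.fst = P) (hsnd : μ.map Prod.snd = Q) :
    Integrable (fun p : ℝ × ℝ => ‖p.1 - p.2‖ ^ 2) μ := by
  have h1 : Integrable (fun x : ℝ => x ^ 2) (μ.map Prod.fst) := hfst ▸ h2
  have h2' : Integrable (fun x : ℝ => x ^ 2) (μ.map Prod.snd) := hsnd ▸ hQ2
  have hf1 : Integrable (fun p : ℝ × ℝ => p.1 ^ 2) μ :=
    (integrable_map_measure (by fun_prop) measurable_fst.aemeasurable).mp h1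
  have hf2 : Integrable (fun p : ℝ × ℝ => p.2 ^ 2) μ :=
    (integrable_map_measure (by fun_prop) measurable_snd.aemeasurable).mp h2'
  have hb : Integrable (fun p : ℝ × ℝ => 2 * p.1 ^ 2 + 2 * p.2 ^ 2) μ :=
    (hf1.const_mul 2).add (hf2.const_mul 2)
  refine hb.mono' (((continuous_fst.sub continuous_snd).norm.pow 2).aestronglyMeasurable)
    (Filter.Eventually.of_forall fun p => ?_)
  have h3 : ‖p.1 - p.2‖ ^ 2 = (p.1 - p.2) ^ 2 := by rw [Real.norm_eq_abs, sq_abs]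
  rw [Real.norm_eq_abs, abs_of_nonneg (by positivity), h3]
  nlinarith [sq_nonneg (p.1 + p.2)]

theorem w2_aux_bound (P Q : Measure ℝ) [IsProbabilityMeasure P] [IsProbabilityMeasure Q]
    (μ : Measure (ℝ × ℝ)) [IsProbabilityMeasure μ]
    (hfst : μ.map Prod.fst = P) (hsnd : μ.map Prod.snd = Q)
    (hint : Integrable (fun p : ℝ × ℝ => ‖p.1 - p.2‖ ^ 2) μ)
    (G' : ℝ → ℝ) (L : ℝ)
    (hG : ∀ s, HasDerivAt (fun t => (Q (Set.Iic t)).toReal) (G' s) s)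
    (hL : ∀ s, |G' s| ≤ L)
    (η : ℝ) (hη : 0 < η) (s : ℝ) :
    |(P (Set.Iic s)).toReal - (Q (Set.Iic s)).toReal| ≤
      L * η + (∫ p, ‖p.1 - p.2‖ ^ 2 ∂μ) / η ^ 2 := by
  set G : ℝ → ℝ := fun t => (Q (Set.Iic t)).toReal with hGdef
  set B : Set (ℝ × ℝ) := {p | η ^ 2 ≤ ‖p.1 - p.2‖ ^ 2} with hB
  have hcheb : (μ B).toReal ≤ (∫ p, ‖p.1 - p.2‖ ^ 2 ∂μ) / η ^ 2 := by
    rw [le_div_iff₀ (by positivity), mul_comm]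
    exact mul_meas_ge_le_integral_of_nonneg
      (Filter.Eventually.of_forall fun p => by positivity) hint (η ^ 2)
  have hlip : ∀ a b : ℝ, |G b - G a| ≤ L * |b - a| := by
    intro a b
    have := Convex.norm_image_sub_le_of_norm_hasDerivWithin_le
      (f := G) (f' := G') (s := Set.univ) (C := L)
      (fun x _ => (hG x).hasDerivWithinAt) (fun x _ => by simpa using hL x)
      convex_univ (Set.mem_univ a) (Set.mem_univ b)
    simpa [Real.norm_eq_abs] using this
  have hBiff : ∀ p : ℝ × ℝ, p ∈ B ↔ η ≤ |p.1 - p.2| := by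
    intro p
    rw [hB, Set.mem_setOf_eq, Real.norm_eq_abs]
    constructor
    · intro h; nlinarith [abs_nonneg (p.1 - p.2)]
    · intro h; nlinarith [abs_nonneg (p.1 - p.2)]
  have hmeas : ∀ t : ℝ, μ (Prod.fst ⁻¹' Set.Iic t) = P (Set.Iic t) := fun t => by
    rw [← hfst, Measure.map_apply measurable_fst measurableSet_Iic]
  have hmeas2 : ∀ t : ℝ, μ (Prod.snd ⁻¹' Set.Iic t) = Q (Set.Iic t) := fun t => by
    rw [← hsnd, Measure.map_apply measurable_snd measurableSet_Iic]
  have dir1 : (P (Set.Iic s)).toReal ≤ G (s + η) + (μ B).toReal := by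
    have hsub : Prod.fst ⁻¹' Set.Iic s ⊆ Prod.snd ⁻¹' Set.Iic (s + η) ∪ B := by
      intro p hp
      by_cases h : p ∈ B
      · exact Or.inr h
      · left
        have h' := (hBiff p).not.mp h
        push_neg at h'
        have h'' := abs_lt.mp h'
        simp only [Set.mem_preimage, Set.mem_Iic] at hp ⊢
        linarith [h''.2]
    have h1 : μ (Prod.fst ⁻¹' Set.Iic s) ≤ μ (Prod.snd ⁻¹' Set.Iic (s + η)) + μ B :=
      (measure_mono hsub).trans (measure_union_le _ _)
    rw [hmeas, hmeas2] at h1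
    have := ENNReal.toReal_mono (ENNReal.add_ne_top.mpr ⟨measure_ne_top _ _, measure_ne_top _ _⟩) h1
    rwa [ENNReal.toReal_add (measure_ne_top _ _) (measure_ne_top _ _)] at this
  have dir2 : G (s - η) ≤ (P (Set.Iic s)).toReal + (μ B).toReal := by
    have hsub : Prod.snd ⁻¹' Set.Iic (s - η) ⊆ Prod.fst ⁻¹' Set.Iic s ∪ B := by
      intro p hp
      by_cases h : p ∈ B
      · exact Or.inr h
      · left
        have h' := (hBiff p).not.mp h
        push_neg at h'
        have h'' := abs_lt.mp h'
        simp only [Set.mem_preimage, Set.mem_Iic] at hp ⊢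
        linarith [h''.1]
    have h1 : μ (Prod.snd ⁻¹' Set.Iic (s - η)) ≤ μ (Prod.fst ⁻¹' Set.Iic s) + μ B :=
      (measure_mono hsub).trans (measure_union_le _ _)
    rw [hmeas, hmeas2] at h1
    have := ENNReal.toReal_mono (ENNReal.add_ne_top.mpr ⟨measure_ne_top _ _, measure_ne_top _ _⟩) h1
    rwa [ENNReal.toReal_add (measure_ne_top _ _) (measure_ne_top _ _)] at this
  have l1 : |G (s + η) - G s| ≤ L * η := by
    have := hlip s (s + η); simpa [abs_of_pos hη] using this
  have l2 : |G s - G (s - η)| ≤ L * η := by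
    have := hlip (s - η) s
    have he : s - (s - η) = η := by ring
    rwa [he, abs_of_pos hη] at this
  rw [abs_sub_le_iff]
  constructor
  · have := abs_le.mp l1
    linarith [hcheb, dir1, this.1, this.2]
  · have := abs_le.mp l2
    linarith [hcheb, dir2, this.1, this.2]


/-- The second-order Wasserstein distance between two measures on a normed space. -/
noncomputable def W2 {B : Type*} [NormedAddCommGroup B] [MeasurableSpace B]
    (P Q : Measure B) : ℝ :=
  sInf { r | ∃ μ : Measure (B × B), IsProbabilityMeasure μ ∧
    μ.map Prod.fst = P ∧ μ.map Prod.snd = Q ∧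
    r = (∫ p, ‖p.1 - p.2‖ ^ 2 ∂μ) ^ (1/2 : ℝ) }

/-- If the CDF `G` of `Q` is differentiable with bounded derivative and `P_n → Q` in
second-order Wasserstein distance, then the CDFs `F_n` of `P_n` converge to `G`
uniformly on `ℝ`. -/
theorem stmt_18 (P : ℕ → Measure ℝ) (Q : Measure ℝ)
    [∀ n, IsProbabilityMeasure (P n)] [IsProbabilityMeasure Q]
    (h2 : ∀ n, Integrable (fun x => x ^ 2) (P n)) (hQ2 : Integrable (fun x => x ^ 2) Q)
    (G' : ℝ → ℝ) (L : ℝ)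
    (hG : ∀ s, HasDerivAt (fun t => (Q (Set.Iic t)).toReal) (G' s) s)
    (hL : ∀ s, |G' s| ≤ L)
    (hW : Filter.Tendsto (fun n => W2 (P n) Q) Filter.atTop (nhds 0)) :
    TendstoUniformly (fun n s => ((P n) (Set.Iic s)).toReal)
      (fun s => (Q (Set.Iic s)).toReal) Filter.atTop := by
  rw [Metric.tendstoUniformly_iff]
  intro ε hε
  have hL0 : 0 ≤ L := le_trans (abs_nonneg _) (hL 0)
  set η : ℝ := ε / (2 * (L + 1)) with hηdef
  have hη : 0 < η := by positivity
  set δ : ℝ := η * Real.sqrt (ε / 2) with hδdef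
  have hδ : 0 < δ := by
    apply mul_pos hη
    exact Real.sqrt_pos.mpr (by positivity)
  filter_upwards [hW.eventually (gt_mem_nhds hδ)] with n hn
  intro s
  -- set of coupling costs
  set S : Set ℝ := { r | ∃ μ : Measure (ℝ × ℝ), IsProbabilityMeasure μ ∧
    μ.map Prod.fst = P n ∧ μ.map Prod.snd = Q ∧
    r = (∫ p, ‖p.1 - p.2‖ ^ 2 ∂μ) ^ (1/2 : ℝ) } with hS
  have hSne : S.Nonempty := by
    refine ⟨_, (P n).prod Q, inferInstance, ?_, ?_, rfl⟩
    · rw [Measure.map_fst_prod]; simp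
    · rw [Measure.map_snd_prod]; simp
  have hSbdd : BddBelow S := by
    refine ⟨0, fun r hr => ?_⟩
    obtain ⟨μ, _, _, _, hr⟩ := hr
    rw [hr]
    exact Real.rpow_nonneg (integral_nonneg fun p => by positivity) _
  have hlt : sInf S < δ := hn
  obtain ⟨r, hrS, hrδ⟩ := (csInf_lt_iff hSbdd hSne).mp hlt
  obtain ⟨μ, hprob, hfst, hsnd, hr⟩ := hrS
  have hInonneg : 0 ≤ ∫ p, ‖p.1 - p.2‖ ^ 2 ∂μ := integral_nonneg fun p => by positivity
  have hr0 : 0 ≤ r := hr ▸ Real.rpow_nonneg hInonneg _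
  have hI : ∫ p, ‖p.1 - p.2‖ ^ 2 ∂μ = r ^ 2 := by
    rw [hr, ← Real.rpow_natCast (_ ^ (1/2 : ℝ)) 2, ← Real.rpow_mul hInonneg]
    norm_num
  have hint : Integrable (fun p : ℝ × ℝ => ‖p.1 - p.2‖ ^ 2) μ :=
    w2_aux_integrable (P n) Q (h2 n) hQ2 μ hfst hsnd
  have hbound := w2_aux_bound (P n) Q μ hfst hsnd hint G' L hG hL η hη s
  have hr2 : r ^ 2 < δ ^ 2 := by nlinarith
  have hδ2 : δ ^ 2 = η ^ 2 * (ε / 2) := by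
    rw [hδdef, mul_pow, Real.sq_sqrt (by positivity : (0:ℝ) ≤ ε / 2)]
  have hterm2 : (∫ p, ‖p.1 - p.2‖ ^ 2 ∂μ) / η ^ 2 < ε / 2 := by
    rw [hI, div_lt_iff₀ (by positivity)]
    calc r ^ 2 < δ ^ 2 := hr2
    _ = ε / 2 * η ^ 2 := by rw [hδ2]; ring
  have heq : (L + 1) * η = ε / 2 := by
    rw [hηdef]
    field_simp
  have hterm1 : L * η < ε / 2 := by nlinarith
  rw [Real.dist_eq, abs_sub_comm]
  calc |(P n (Set.Iic s)).toReal - (Q (Set.Iic s)).toReal| ≤ _ := hbound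
  _ < ε / 2 + ε / 2 := by linarith
  _ = ε := by ring
end
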